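/- For every natural number q, the integral of X over the event {T ≥ q} satisfies ∫_{{ω : T(ω) ≥ q}} X dℙ ≤ r·(1−p)^q·(q·p + 1)/p (as a Lebesgue lower integral in ℝ≥0∞, with the right-hand side coerced from the reals). -/

import Mathlib

open MeasureTheory ENNReal

/-- If `T` counts episodes with geometric tail bound `ℙ(T ≥ j) ≤ (1−p)^j` and the
reward `X` satisfies `X ≤ r·(T+1)`, then for every `q` the integral of `X` over the
event `{T ≥ q}` is at most `r·(1−p)^q·(q·p+1)/p`. -/
theorem integral_tail_reward_bound
    {Ω : Type*} [MeasurableSpace Ω] (P : Measure Ω) [IsProbabilityMeasure P]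
    (T : Ω → ℕ) (hT : Measurable T)
    (p : ℝ) (hp0 : 0 < p) (hp1 : p ≤ 1)
    (htail : ∀ j : ℕ, P {ω | j ≤ T ω} ≤ ENNReal.ofReal ((1 - p) ^ j))
    (r : ℝ) (hr : 0 ≤ r)
    (X : Ω → ℝ≥0∞) (hX : Measurable X)
    (hXb : ∀ ω, X ω ≤ ENNReal.ofReal r * ((T ω : ℝ≥0∞) + 1))
    (q : ℕ) :
    ∫⁻ ω in {ω | q ≤ T ω}, X ω ∂P
      ≤ ENNReal.ofReal (r * ((1 - p) ^ q * ((q : ℝ) * p + 1) / p)) := by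
  classical
  have h1p : (0:ℝ) ≤ 1 - p := by linarith
  set A : Set Ω := {ω | q ≤ T ω} with hA
  have hAm : MeasurableSet A := measurableSet_le measurable_const hT
  have hSm : ∀ j : ℕ, MeasurableSet {ω | j ≤ T ω} := fun j =>
    measurableSet_le measurable_const hT
  have hTm : Measurable fun ω => ((T ω : ℝ≥0∞)) := measurable_from_top.comp hT
  -- step 1
  have h1 : ∫⁻ ω in A, X ω ∂P ≤ ∫⁻ ω in A, ENNReal.ofReal r * ((T ω : ℝ≥0∞) + 1) ∂P :=
    lintegral_mono fun ω => hXb ω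
  -- step 2
  have h2 : ∫⁻ ω in A, ENNReal.ofReal r * ((T ω : ℝ≥0∞) + 1) ∂P
      = ENNReal.ofReal r * ∫⁻ ω in A, ((T ω : ℝ≥0∞) + 1) ∂P :=
    lintegral_const_mul _ (hTm.add measurable_const)
  -- pointwise decomposition
  have hpt : ∀ ω : Ω, ∑' j : ℕ, Set.indicator {ω' | j ≤ T ω'} (fun _ => (1:ℝ≥0∞)) ω
      = (T ω : ℝ≥0∞) + 1 := by
    intro ω
    have h0 : ∀ j ∉ Finset.range (T ω + 1),
        Set.indicator {ω' | j ≤ T ω'} (fun _ => (1:ℝ≥0∞)) ω = 0 := by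
      intro j hj
      simp only [Finset.mem_range, Nat.lt_succ_iff, not_le] at hj
      simp [Set.indicator_apply, hj.not_ge]
    rw [tsum_eq_sum h0]
    have h1' : ∀ j ∈ Finset.range (T ω + 1),
        Set.indicator {ω' | j ≤ T ω'} (fun _ => (1:ℝ≥0∞)) ω = 1 := by
      intro j hj
      simp only [Finset.mem_range, Nat.lt_succ_iff] at hj
      simp [Set.indicator_apply, hj]
    rw [Finset.sum_congr rfl h1']
    simp
  -- step 3: integral equals sum of measures
  have h3 : ∫⁻ ω in A, ((T ω : ℝ≥0∞) + 1) ∂P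
      = ∑' j : ℕ, P ({ω | j ≤ T ω} ∩ A) := by
    rw [lintegral_congr fun ω => (hpt ω).symm]
    rw [lintegral_tsum fun j => ((measurable_const.indicator (hSm j)).aemeasurable)]
    refine tsum_congr fun j => ?_
    rw [lintegral_indicator (hSm j), setLIntegral_const, one_mul,
      Measure.restrict_apply (hSm j)]
  -- step 4: bound each term
  have h4 : ∀ j : ℕ, P ({ω | j ≤ T ω} ∩ A) ≤ ENNReal.ofReal ((1-p)^(max q j)) := by
    intro j
    refine le_trans (le_trans (measure_mono ?_) (htail (max q j))) le_rfl
    intro ω hω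
    simp only [Set.mem_inter_iff, Set.mem_setOf_eq, hA] at hω ⊢
    exact max_le hω.2 hω.1
  -- step 5: sum the bound
  have h5 : ∑' j : ℕ, ENNReal.ofReal ((1-p)^(max q j))
      = ENNReal.ofReal ((1-p)^q * ((q:ℝ) + 1/p)) := by
    have hsplit := Summable.sum_add_tsum_nat_add'
      (f := fun j : ℕ => ENNReal.ofReal ((1-p)^(max q j))) (k := q) ENNReal.summable
    rw [← hsplit]
    have e1 : ∑ j ∈ Finset.range q, ENNReal.ofReal ((1-p)^(max q j))
        = (q : ℝ≥0∞) * ENNReal.ofReal ((1-p)^q) := by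
      rw [Finset.sum_congr rfl fun j hj => by
        rw [max_eq_left (le_of_lt (Finset.mem_range.mp hj))]]
      simp [mul_comm]
    have e2 : ∑' j : ℕ, ENNReal.ofReal ((1-p)^(max q (j + q)))
        = ENNReal.ofReal ((1-p)^q) * ENNReal.ofReal (1/p) := by
      have : ∀ j : ℕ, ENNReal.ofReal ((1-p)^(max q (j + q)))
          = ENNReal.ofReal ((1-p))^j * ENNReal.ofReal ((1-p)^q) := by
        intro j
        rw [max_eq_right (Nat.le_add_left q j), pow_add,
          ENNReal.ofReal_mul (pow_nonneg h1p j), ENNReal.ofReal_pow h1p]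
      have hgeo : (1 - ENNReal.ofReal (1-p))⁻¹ = ENNReal.ofReal (1/p) := by
        rw [← ENNReal.ofReal_one, ← ENNReal.ofReal_sub _ h1p,
          show (1:ℝ) - (1-p) = p by ring, ← ENNReal.ofReal_inv_of_pos hp0]
        norm_num
      rw [tsum_congr this, ENNReal.tsum_mul_right, ENNReal.tsum_geometric, hgeo, mul_comm]
    rw [e1, e2]
    rw [← ENNReal.ofReal_natCast q, ← ENNReal.ofReal_mul (Nat.cast_nonneg q),
      ← ENNReal.ofReal_mul (pow_nonneg h1p q),
      ← ENNReal.ofReal_add (by positivity) (by positivity)]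
    congr 1
    ring
  -- combine
  calc ∫⁻ ω in A, X ω ∂P
      ≤ ENNReal.ofReal r * ∫⁻ ω in A, ((T ω : ℝ≥0∞) + 1) ∂P := h2 ▸ h1
    _ = ENNReal.ofReal r * ∑' j : ℕ, P ({ω | j ≤ T ω} ∩ A) := by rw [h3]
    _ ≤ ENNReal.ofReal r * ∑' j : ℕ, ENNReal.ofReal ((1-p)^(max q j)) := by
        exact mul_le_mul_right (ENNReal.tsum_le_tsum h4) _
    _ = ENNReal.ofReal r * ENNReal.ofReal ((1-p)^q * ((q:ℝ) + 1/p)) := by rw [h5]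
    _ = ENNReal.ofReal (r * ((1 - p) ^ q * ((q : ℝ) * p + 1) / p)) := by
        rw [← ENNReal.ofReal_mul hr]
        congr 1
        field_simp
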